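/- Let A be a locally C*-algebra with defining family {p_λ} and let π : A → B(H) be a *-morphism to the bounded operators on a Hilbert space H. Then π is continuous if and only if there exists λ ∈ Λ such that ‖π(a)‖ ≤ p_λ(a) for all a ∈ A. -/

import Mathlib

open scoped ComplexOrder

/-- A C*-seminorm on a complex *-algebra. -/
structure IsCstarSeminorm {A : Type*} [Ring A] [StarRing A] [Algebra ℂ A] (p : A → ℝ) : Prop where
  nonneg : ∀ a, 0 ≤ p a
  map_zero' : p 0 = 0
  add_le : ∀ a b, p (a + b) ≤ p a + p b
  smul : ∀ (c : ℂ) (a : A), p (c • a) = ‖c‖ * p a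
  mul_le : ∀ a b, p (a * b) ≤ p a * p b
  star_eq : ∀ a, p (star a) = p a
  cstar : ∀ a, p (star a * a) = p a ^ 2

/-- The family of canonical C*-seminorms on the matrix algebras `Mₙ(A)` induced by a
C*-seminorm `p` on `A`. -/
structure IsMatrixCstarSeminormFamily {A : Type*} [Ring A] [StarRing A] [Algebra ℂ A]
    (p : A → ℝ) (pn : ∀ n : ℕ, Matrix (Fin n) (Fin n) A → ℝ) : Prop where
  cstar : ∀ n, IsCstarSeminorm (pn n)
  ker : ∀ n (M : Matrix (Fin n) (Fin n) A), pn n M = 0 ↔ ∀ i j, p (M i j) = 0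
  one : ∀ a : A, pn 1 (fun _ _ => a) = p a

/-- `λ`-positivity of a matrix over `A` relative to the matrix seminorm `pn` (at level `λ`):
`M = b*b + c` with `pn c = 0`. -/
def LamPos {A : Type*} [Ring A] [StarRing A]
    (pn : ∀ n : ℕ, Matrix (Fin n) (Fin n) A → ℝ) (n : ℕ)
    (M : Matrix (Fin n) (Fin n) A) : Prop :=
  ∃ x c : Matrix (Fin n) (Fin n) A, pn n c = 0 ∧ M = star x * x + c

/-- Positivity of a matrix of bounded operators, i.e. positivity in `B(H^{⊕n}) ≅ Mₙ(B(H))`. -/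
def MatPosOp {H : Type*} [NormedAddCommGroup H] [InnerProductSpace ℂ H] [CompleteSpace H]
    {n : ℕ} (T : Matrix (Fin n) (Fin n) (H →L[ℂ] H)) : Prop :=
  ∃ X : Matrix (Fin n) (Fin n) (H →L[ℂ] H), T = star X * X

/-- The bounded operator on `H^{⊕n}` (with the `ℓ²`-Hilbert space structure) induced by an
`n × n` matrix of bounded operators on `H`. -/
noncomputable def matOp {H : Type*} [NormedAddCommGroup H] [InnerProductSpace ℂ H]
    {n : ℕ} (T : Matrix (Fin n) (Fin n) (H →L[ℂ] H)) :
    PiLp 2 (fun _ : Fin n => H) →L[ℂ] PiLp 2 (fun _ : Fin n => H) :=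
  ((PiLp.continuousLinearEquiv 2 ℂ (fun _ : Fin n => H)).symm :
      ((_ : Fin n) → H) →L[ℂ] PiLp 2 (fun _ : Fin n => H)) ∘L
    (ContinuousLinearMap.pi fun i => ∑ j, (T i j) ∘L (ContinuousLinearMap.proj j)) ∘L
    ((PiLp.continuousLinearEquiv 2 ℂ (fun _ : Fin n => H)) :
      PiLp 2 (fun _ : Fin n => H) →L[ℂ] ((_ : Fin n) → H))

/-- A map into `B(H)` has trivial commutant (irreducibility). -/
def HasTrivialCommutant {R H : Type*} [NormedAddCommGroup H] [InnerProductSpace ℂ H]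
    (φ : R → (H →L[ℂ] H)) : Prop :=
  ∀ T : H →L[ℂ] H, (∀ a, T * φ a = φ a * T) → ∃ c : ℂ, T = c • (1 : H →L[ℂ] H)

/-- Complete positivity at level `λ` for a linear map defined on all of `A`, with values in
`B(H)`: `λ`-positive matrices go to positive operator matrices, and matrices annihilated by the
`λ`-th matrix seminorm go to zero. -/
def IsLamCPmap {A H : Type*} [Ring A] [StarRing A] [Algebra ℂ A]
    [NormedAddCommGroup H] [InnerProductSpace ℂ H] [CompleteSpace H]
    (pn : ∀ n : ℕ, Matrix (Fin n) (Fin n) A → ℝ) (φ : A →ₗ[ℂ] (H →L[ℂ] H)) : Prop :=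
  (∀ (n : ℕ) (M : Matrix (Fin n) (Fin n) A), LamPos pn n M → MatPosOp (M.map φ)) ∧
  (∀ (n : ℕ) (M : Matrix (Fin n) (Fin n) A), pn n M = 0 → M.map φ = 0)

/-- Complete positivity at level `λ` for a linear map defined on a local operator system
`S ⊆ A`, with values in `B(H)`. -/
def IsLamCPmapOn {A H : Type*} [Ring A] [StarRing A] [Algebra ℂ A]
    [NormedAddCommGroup H] [InnerProductSpace ℂ H] [CompleteSpace H]
    (pn : ∀ n : ℕ, Matrix (Fin n) (Fin n) A → ℝ) (S : Submodule ℂ A)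
    (φ : ↥S →ₗ[ℂ] (H →L[ℂ] H)) : Prop :=
  (∀ (n : ℕ) (M : Matrix (Fin n) (Fin n) ↥S), LamPos pn n (M.map Subtype.val) →
      MatPosOp (M.map fun s => φ s)) ∧
  (∀ (n : ℕ) (M : Matrix (Fin n) (Fin n) ↥S), pn n (M.map Subtype.val) = 0 →
      M.map (fun s => φ s) = 0)

/-- Complete positivity (in the C*-algebraic, purely algebraic sense) of a linear map from a
ring with involution to `B(H)`: matrices of the form `x*x` are sent to positive operator
matrices. For a C*-algebra this is the usual notion of complete positivity. -/
def IsCstarCPmap {R H : Type*} [Ring R] [StarRing R] [Algebra ℂ R]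
    [NormedAddCommGroup H] [InnerProductSpace ℂ H] [CompleteSpace H]
    (φ : R →ₗ[ℂ] (H →L[ℂ] H)) : Prop :=
  ∀ (n : ℕ) (M : Matrix (Fin n) (Fin n) R),
    (∃ x : Matrix (Fin n) (Fin n) R, M = star x * x) → MatPosOp (M.map φ)

/-- A boundary representation (in the sense of Arveson) of a C*-algebra `R` for the operator
system `T ⊆ R`: an irreducible representation which is the unique unital completely positive
extension of its restriction to `T`. -/
def IsBoundaryRep {R H : Type*} [Ring R] [StarRing R] [Algebra ℂ R]
    [NormedAddCommGroup H] [InnerProductSpace ℂ H] [CompleteSpace H]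
    (T : Set R) (ψ : R →⋆ₐ[ℂ] (H →L[ℂ] H)) : Prop :=
  HasTrivialCommutant ⇑ψ ∧
  ∀ χ : R →ₗ[ℂ] (H →L[ℂ] H), χ 1 = 1 → IsCstarCPmap χ → (∀ t ∈ T, χ t = ψ t) →
    ∀ b, χ b = ψ b

/-- An admissible local boundary representation of the locally C*-algebra `A` for the local
operator system `S ⊆ A`. -/
def IsAdmLocBdryRep {Λ A H : Type*} [Ring A] [StarRing A] [Algebra ℂ A]
    [NormedAddCommGroup H] [InnerProductSpace ℂ H] [CompleteSpace H]
    (p : Λ → A → ℝ) (pn : Λ → ∀ n : ℕ, Matrix (Fin n) (Fin n) A → ℝ)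
    (S : Submodule ℂ A) (π : A →⋆ₐ[ℂ] (H →L[ℂ] H)) : Prop :=
  HasTrivialCommutant ⇑π ∧
  ∃ l₀ : Λ, (∀ a, ‖π a‖ ≤ p l₀ a) ∧
    ∀ φ : A →ₗ[ℂ] (H →L[ℂ] H), φ 1 = 1 → (∃ l, IsLamCPmap (pn l) φ) →
      (∀ a, ‖φ a‖ ≤ p l₀ a) → (∀ s ∈ S, φ s = π s) → ∀ a, φ a = π a

/-- An admissible local completely positive map between local operator systems
`S₁ ⊆ A₁` and `S₂ ⊆ A₂` (same index set `Λ` of seminorms). -/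
def IsAdmLocCP {Λ A₁ A₂ : Type*} [Ring A₁] [StarRing A₁] [Algebra ℂ A₁]
    [Ring A₂] [StarRing A₂] [Algebra ℂ A₂]
    (pn₁ : Λ → ∀ n : ℕ, Matrix (Fin n) (Fin n) A₁ → ℝ)
    (pn₂ : Λ → ∀ n : ℕ, Matrix (Fin n) (Fin n) A₂ → ℝ)
    (S₁ : Submodule ℂ A₁) (S₂ : Submodule ℂ A₂) (φ : ↥S₁ →ₗ[ℂ] ↥S₂) : Prop :=
  ∀ (l : Λ) (n : ℕ) (M : Matrix (Fin n) (Fin n) ↥S₁),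
    (LamPos (pn₁ l) n (M.map Subtype.val) →
      LamPos (pn₂ l) n (M.map fun s => ((φ s : ↥S₂) : A₂))) ∧
    (pn₁ l n (M.map Subtype.val) = 0 → pn₂ l n (M.map fun s => ((φ s : ↥S₂) : A₂)) = 0)

/-- A local completely isometric map between local operator systems. -/
def IsLocCompIsometric {Λ A₁ A₂ : Type*} [Ring A₁] [StarRing A₁] [Algebra ℂ A₁]
    [Ring A₂] [StarRing A₂] [Algebra ℂ A₂]
    (pn₁ : Λ → ∀ n : ℕ, Matrix (Fin n) (Fin n) A₁ → ℝ)
    (pn₂ : Λ → ∀ n : ℕ, Matrix (Fin n) (Fin n) A₂ → ℝ)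
    (S₁ : Submodule ℂ A₁) (S₂ : Submodule ℂ A₂) (φ : ↥S₁ →ₗ[ℂ] ↥S₂) : Prop :=
  ∀ (l : Λ) (n : ℕ) (M : Matrix (Fin n) (Fin n) ↥S₁),
    pn₂ l n (M.map fun s => ((φ s : ↥S₂) : A₂)) = pn₁ l n (M.map Subtype.val)

/-- A completely positive map (algebraic sense) between operator systems `T₁ ⊆ R₁`, `T₂ ⊆ R₂`
sitting in C*-algebras. -/
def IsCstarCPmapOn {R₁ R₂ : Type*} [Ring R₁] [StarRing R₁] [Algebra ℂ R₁]
    [Ring R₂] [StarRing R₂] [Algebra ℂ R₂]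
    (T₁ : Submodule ℂ R₁) (T₂ : Submodule ℂ R₂) (ψ : ↥T₁ →ₗ[ℂ] ↥T₂) : Prop :=
  ∀ (n : ℕ) (M : Matrix (Fin n) (Fin n) ↥T₁),
    (∃ x : Matrix (Fin n) (Fin n) R₁, M.map Subtype.val = star x * x) →
    ∃ y : Matrix (Fin n) (Fin n) R₂, M.map (fun s => ((ψ s : ↥T₂) : R₂)) = star y * y

/-- A local boundary ideal for a local operator system `S ⊆ A`: a closed two-sided *-ideal such
that the quotient map is completely isometric on `S` with respect to the quotient matrix
seminorms. -/
def IsLocBdryIdeal {Λ A : Type*} [Ring A] [StarRing A] [Algebra ℂ A] [TopologicalSpace A]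
    (pn : Λ → ∀ n : ℕ, Matrix (Fin n) (Fin n) A → ℝ) (S : Submodule ℂ A)
    (I : Set A) : Prop :=
  (∃ J : TwoSidedIdeal A, (J : Set A) = I) ∧ (∀ a ∈ I, star a ∈ I) ∧ IsClosed I ∧
  ∀ (l : Λ) (n : ℕ) (M : Matrix (Fin n) (Fin n) ↥S),
    sInf {r : ℝ | ∃ C : Matrix (Fin n) (Fin n) A, (∀ i j, C i j ∈ I) ∧
        r = pn l n (M.map Subtype.val + C)} = pn l n (M.map Subtype.val)


/-- Auxiliary: star algebra homomorphisms between unital C*-algebras are contractive. -/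
theorem starAlgHom_norm_apply_le_aux {C D : Type*} [CStarAlgebra C] [CStarAlgebra D]
    (f : C →⋆ₐ[ℂ] D) (a : C) : ‖f a‖ ≤ ‖a‖ :=
  NonUnitalStarAlgHom.norm_apply_le f.toNonUnitalStarAlgHom a

/-- a *-morphism `φ : A → B(H)` is continuous iff `‖φ a‖ ≤ p_λ(a)` for some `λ`. -/
theorem stmt5 {Λ : Type*} [Preorder Λ] {A : Type*} [Ring A] [StarRing A] [Algebra ℂ A] [StarModule ℂ A]
    {B : Λ → Type*} [∀ l, NormedRing (B l)] [∀ l, StarRing (B l)] [∀ l, CStarRing (B l)]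
    [∀ l, NormedAlgebra ℂ (B l)] [∀ l, StarModule ℂ (B l)] [∀ l, CompleteSpace (B l)]
    (p : Λ → A → ℝ) (hp : ∀ l, IsCstarSeminorm (p l))
    (hmono : ∀ ⦃l₁ l₂ : Λ⦄, l₁ ≤ l₂ → ∀ a, p l₁ a ≤ p l₂ a)
    (π : ∀ l, A →⋆ₐ[ℂ] B l) (hsurj : ∀ l, Function.Surjective ⇑(π l))
    (hnorm : ∀ l a, ‖(π l) a‖ = p l a)
    [Nonempty Λ] [IsDirected Λ (· ≤ ·)] [TopologicalSpace A]
    (hind : Topology.IsInducing (fun a : A => fun l => (π l) a))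
    {H : Type*} [NormedAddCommGroup H] [InnerProductSpace ℂ H] [CompleteSpace H]
    (φ : A →⋆ₐ[ℂ] (H →L[ℂ] H)) :
    Continuous ⇑φ ↔ ∃ l : Λ, ∀ a : A, ‖φ a‖ ≤ p l a := by
  classical
  constructor
  · intro hcont
    -- Extract a basic neighborhood of 0 on which φ is small.
    have hf0 : (fun a : A => fun l => (π l) a) 0 = 0 := by
      funext l; simp
    have h0 : {a : A | ‖φ a‖ < 1} ∈ nhds (0 : A) := by
      have h1 := hcont.tendsto 0
      rw [map_zero] at h1
      have hball := h1 (Metric.ball_mem_nhds (0 : H →L[ℂ] H) one_pos)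
      refine Filter.mem_of_superset hball ?_
      intro a ha
      simpa [Metric.mem_ball, dist_zero_right] using ha
    rw [hind.nhds_eq_comap] at h0
    simp only [map_zero] at h0
    rw [Filter.mem_comap] at h0
    obtain ⟨S, hS, hSsub⟩ := h0
    rw [nhds_pi, Filter.mem_pi] at hS
    obtain ⟨I, hIfin, t, ht, htsub⟩ := hS
    choose δ' hδ'pos hδ'sub using fun i => Metric.mem_nhds_iff.mp (ht i)
    set s : Finset Λ := hIfin.toFinset with hs
    obtain ⟨l, hl⟩ := s.exists_le
    set δ : ℝ := (insert (1:ℝ) (s.image δ')).min' ⟨1, Finset.mem_insert_self _ _⟩ with hδdef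
    have hδpos : 0 < δ := by
      have hmem := (insert (1:ℝ) (s.image δ')).min'_mem ⟨1, Finset.mem_insert_self _ _⟩
      rw [← hδdef] at hmem
      rcases Finset.mem_insert.mp hmem with h | h
      · rw [h]; exact one_pos
      · obtain ⟨i, _, hi⟩ := Finset.mem_image.mp h
        rw [← hi]; exact hδ'pos i
    have hδle : ∀ i ∈ s, δ ≤ δ' i := fun i hi =>
      Finset.min'_le _ _ (Finset.mem_insert_of_mem (Finset.mem_image_of_mem δ' hi))
    have hkey : ∀ a : A, p l a < δ → ‖φ a‖ < 1 := by
      intro a ha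
      apply hSsub
      apply htsub
      rw [Set.mem_pi]
      intro i hi
      have hi' : i ∈ s := hIfin.mem_toFinset.mpr hi
      apply hδ'sub i
      rw [Metric.mem_ball, dist_zero_right, hnorm]
      calc p i a ≤ p l a := hmono (hl i hi') a
        _ < δ := ha
        _ ≤ δ' i := hδle i hi'
    have hker : ∀ a : A, (π l) a = 0 → φ a = 0 := by
      intro a ha
      have hpa : p l a = 0 := by rw [← hnorm, ha, norm_zero]
      by_contra hne
      have hφpos : 0 < ‖φ a‖ := norm_pos_iff.mpr hne
      set c : ℝ := 2 / ‖φ a‖ with hc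
      have hcpos : 0 < c := by positivity
      have h1 : p l ((c : ℂ) • a) = 0 := by
        rw [(hp l).smul]; simp [hpa]
      have h2 := hkey _ (by rw [h1]; exact hδpos)
      rw [map_smul, norm_smul] at h2
      have : ‖(c : ℂ)‖ = c := by
        rw [Complex.norm_real, Real.norm_of_nonneg hcpos.le]
      rw [this, hc, div_mul_cancel₀ _ (ne_of_gt hφpos)] at h2
      linarith
    have hcongr : ∀ a a' : A, (π l) a = (π l) a' → φ a = φ a' := by
      intro a a' h
      have h1 : φ (a - a') = 0 := hker _ (by rw [map_sub, h, sub_self])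
      rw [map_sub, sub_eq_zero] at h1
      exact h1
    set σ : B l → A := Function.surjInv (hsurj l) with hσdef
    have hσ : ∀ b, (π l) (σ b) = b := fun b => Function.surjInv_eq (hsurj l) b
    letI iB : CStarAlgebra (B l) :=
      { (inferInstance : NormedRing (B l)), (inferInstance : StarRing (B l)),
        (inferInstance : CStarRing (B l)), (inferInstance : NormedAlgebra ℂ (B l)),
        (inferInstance : StarModule ℂ (B l)), (inferInstance : CompleteSpace (B l)) with }
    let φ' : B l →⋆ₐ[ℂ] (H →L[ℂ] H) :=
      { toFun := fun b => φ (σ b)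
        map_one' := by show φ (σ 1) = 1; rw [hcongr (σ 1) 1 (by rw [hσ, map_one]), map_one]
        map_mul' := fun b c => by
          show φ (σ (b * c)) = φ (σ b) * φ (σ c)
          rw [hcongr (σ (b * c)) (σ b * σ c) (by rw [hσ, map_mul, hσ, hσ]), map_mul]
        map_zero' := by show φ (σ 0) = 0; rw [hcongr (σ 0) 0 (by rw [hσ, map_zero]), map_zero]
        map_add' := fun b c => by
          show φ (σ (b + c)) = φ (σ b) + φ (σ c)
          rw [hcongr (σ (b + c)) (σ b + σ c) (by rw [hσ, map_add, hσ, hσ]), map_add]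
        commutes' := fun r => by
          show φ (σ (algebraMap ℂ (B l) r)) = algebraMap ℂ (H →L[ℂ] H) r
          rw [hcongr (σ (algebraMap ℂ (B l) r)) (algebraMap ℂ A r)
            (by rw [hσ, AlgHomClass.commutes]), AlgHomClass.commutes]
        map_star' := fun b => by
          show φ (σ (star b)) = star (φ (σ b))
          rw [hcongr (σ (star b)) (star (σ b)) (by rw [hσ, map_star, hσ]), map_star] }
    refine ⟨l, fun a => ?_⟩
    have hfac : φ a = φ' ((π l) a) := hcongr a (σ ((π l) a)) (by rw [hσ])
    calc ‖φ a‖ = ‖φ' ((π l) a)‖ := by rw [hfac]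
      _ ≤ ‖(π l) a‖ := @starAlgHom_norm_apply_le_aux (B l) _ iB _ φ' ((π l) a)
      _ = p l a := hnorm l a
  · rintro ⟨l, hl⟩
    rw [continuous_iff_continuousAt]
    intro a₀
    have hπcont : Continuous fun a : A => (π l) a := (continuous_apply l).comp hind.continuous
    rw [ContinuousAt, Metric.tendsto_nhds]
    intro ε hε
    have hopen : IsOpen {a : A | ‖(π l) a - (π l) a₀‖ < ε} := by
      have hc : Continuous fun a : A => ‖(π l) a - (π l) a₀‖ :=
        (hπcont.sub continuous_const).norm
      exact isOpen_lt hc continuous_const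
    have hmem : {a : A | ‖(π l) a - (π l) a₀‖ < ε} ∈ nhds a₀ :=
      hopen.mem_nhds (by simp [hε])
    filter_upwards [hmem] with a ha
    calc dist (φ a) (φ a₀) = ‖φ (a - a₀)‖ := by rw [dist_eq_norm, ← map_sub]
      _ ≤ p l (a - a₀) := hl _
      _ = ‖(π l) (a - a₀)‖ := (hnorm l _).symm
      _ = ‖(π l) a - (π l) a₀‖ := by rw [map_sub]
      _ < ε := ha
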